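/- Existence and uniqueness of the root ν⋆: Let 0 < μ < 1 and ρ > 0 with 1 + ρ ln(1−μ) < 0. Then the equation 1 + ρ ln G(ν, μ) = 0 has exactly one solution ν⋆ in the open interval (0, μ). Moreover, a second root located in the interval (μ, 1] exists if and only if 1 + ρ ln μ ≤ 0. -/

import Mathlib

open MeasureTheory Filter

/-- Bernoulli measure on `Bool` with parameter `p` = probability of `true`. -/
noncomputable def bern (p : ℝ) : Measure Bool :=
  (Real.toNNReal p) • Measure.dirac true + (Real.toNNReal (1 - p)) • Measure.dirac false

/-- Uniform distribution on `[0,1]`. -/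
noncomputable def unif01 : Measure ℝ := MeasureTheory.volume.restrict (Set.Icc (0:ℝ) 1)

/-- The probability space of the homogeneous binary MAG model `M(n;L)`:
i.i.d. Bernoulli attribute bits and, independently, i.i.d. Uniform(0,1) variables. -/
noncomputable def magMeasure (n L : ℕ) (p : ℝ) :
    Measure ((Fin n → Fin L → Bool) × (Fin n × Fin n → ℝ)) :=
  (Measure.pi fun _ : Fin n => Measure.pi fun _ : Fin L => bern p).prod
    (Measure.pi fun _ : Fin n × Fin n => unif01)

/-- `Q_L(a,b) = ∏_{ℓ} q(a_ℓ, b_ℓ)`. -/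
def QL {L : ℕ} (q : Bool → Bool → ℝ) (a b : Fin L → Bool) : ℝ :=
  ∏ ℓ : Fin L, q (a ℓ) (b ℓ)

/-- Distinct nodes `u, v` are adjacent iff `U(u,v) ≤ Q_L(A(u),A(v))`, where the uniform
variable attached to the unordered pair `{u,v}` is the one indexed by `(min u v, max u v)`. -/
def Adj {n L : ℕ} (q : Bool → Bool → ℝ)
    (ω : (Fin n → Fin L → Bool) × (Fin n × Fin n → ℝ)) (u v : Fin n) : Prop :=
  u ≠ v ∧ ω.2 (min u v, max u v) ≤ QL q (ω.1 u) (ω.1 v)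

/-- Node `u` is isolated if it is adjacent to no other node. -/
def Isolated {n L : ℕ} (q : Bool → Bool → ℝ)
    (ω : (Fin n → Fin L → Bool) × (Fin n × Fin n → ℝ)) (u : Fin n) : Prop :=
  ∀ v, ¬ Adj q ω u v

/-- `S_L(u)`: the number of attributes exhibited by node `u`. -/
def Scount {n L : ℕ} (ω : (Fin n → Fin L → Bool) × (Fin n × Fin n → ℝ)) (u : Fin n) : ℕ :=
  (Finset.univ.filter fun ℓ : Fin L => ω.1 u ℓ = true).card

open scoped Classical in
/-- `I_n(L)`: the number of isolated nodes. -/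
noncomputable def numIsolated {n L : ℕ} (q : Bool → Bool → ℝ)
    (ω : (Fin n → Fin L → Bool) × (Fin n × Fin n → ℝ)) : ℕ :=
  (Finset.univ.filter fun u : Fin n => Isolated q ω u).card

open scoped Classical in
/-- `I_n^{(k)}(L)`: the number of isolated nodes `u` with `S_L(u) = k`. -/
noncomputable def numIsolatedWith {n L : ℕ} (q : Bool → Bool → ℝ) (k : ℕ)
    (ω : (Fin n → Fin L → Bool) × (Fin n × Fin n → ℝ)) : ℕ :=
  (Finset.univ.filter fun u : Fin n => Isolated q ω u ∧ Scount ω u = k).card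

open scoped Classical in
/-- `ξ^{(k)}(u)`: the indicator that node `u` is isolated and `S_L(u) = k`. -/
noncomputable def xiInd {n L : ℕ} (q : Bool → Bool → ℝ) (k : ℕ)
    (ω : (Fin n → Fin L → Bool) × (Fin n × Fin n → ℝ)) (u : Fin n) : ℝ :=
  if Isolated q ω u ∧ Scount ω u = k then 1 else 0

/-- `Γ(a) = μ(0) q(a,0) + μ(1) q(a,1)`, with `μ(1) = μ1`, `μ(0) = 1 - μ1`. -/
def Gam (μ1 : ℝ) (q : Bool → Bool → ℝ) (a : Bool) : ℝ :=
  (1 - μ1) * q a false + μ1 * q a true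

/-- A scaling `L : ℕ → ℕ` is `ρ`-admissible if `L_n ~ ρ ln n` as `n → ∞`. -/
def Admissible (ρ : ℝ) (L : ℕ → ℕ) : Prop :=
  Asymptotics.IsEquivalent Filter.atTop (fun n => (L n : ℝ)) (fun n => ρ * Real.log n)

/-- `G(ν,μ) = (μ/ν)^ν ((1-μ)/(1-ν))^{1-ν}` (real powers; the conventions at `ν = 0,1`
agree with the continuous extension). -/
noncomputable def Gfun (ν μ : ℝ) : ℝ :=
  (μ / ν) ^ ν * ((1 - μ) / (1 - ν)) ^ (1 - ν)

/-- `Q*_L(a) = E[Q_L(a,A)]`, `A` a vector of `L` i.i.d. Bernoulli(μ1) bits. -/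
noncomputable def Qstar {L : ℕ} (μ1 : ℝ) (q : Bool → Bool → ℝ) (a : Fin L → Bool) : ℝ :=
  ∫ b, QL q a b ∂(Measure.pi fun _ : Fin L => bern μ1)

/-- `Q**_L(a,b) = E[Q_L(a,A) Q_L(b,A)]`. -/
noncomputable def Qstarstar {L : ℕ} (μ1 : ℝ) (q : Bool → Bool → ℝ) (a b : Fin L → Bool) : ℝ :=
  ∫ c, QL q a c * QL q b c ∂(Measure.pi fun _ : Fin L => bern μ1)

/-- `Q̃_L(a,b) = Q*_L(a) + Q*_L(b) − Q**_L(a,b)`. -/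
noncomputable def Qtilde {L : ℕ} (μ1 : ℝ) (q : Bool → Bool → ℝ) (a b : Fin L → Bool) : ℝ :=
  Qstar μ1 q a + Qstar μ1 q b - Qstarstar μ1 q a b

noncomputable def phiAux (μ ν : ℝ) : ℝ :=
  ν * Real.log μ - ν * Real.log ν + (1 - ν) * Real.log (1 - μ) - (1 - ν) * Real.log (1 - ν)

lemma phiAux_continuous (μ : ℝ) : Continuous (phiAux μ) := by
  have h1 : Continuous fun ν : ℝ => ν * Real.log ν := Real.continuous_mul_log
  have h2 : Continuous fun ν : ℝ => (1 - ν) * Real.log (1 - ν) :=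
    h1.comp (continuous_const.sub continuous_id)
  unfold phiAux
  fun_prop

lemma log_Gfun_eq {μ ν : ℝ} (hμ : μ ∈ Set.Ioo (0:ℝ) 1) (hν0 : 0 < ν) (hν1 : ν ≤ 1) :
    Real.log (Gfun ν μ) = phiAux μ ν := by
  rcases eq_or_lt_of_le hν1 with rfl | hν1
  · simp [Gfun, phiAux, Real.log_one]
  · have h1 : (0:ℝ) < μ / ν := div_pos hμ.1 hν0
    have h2 : (0:ℝ) < (1 - μ) / (1 - ν) := div_pos (by linarith [hμ.2]) (by linarith)
    rw [Gfun, Real.log_mul (by positivity) (by positivity), Real.log_rpow h1, Real.log_rpow h2,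
      Real.log_div hμ.1.ne' hν0.ne',
      Real.log_div (by linarith [hμ.2] : (1:ℝ) - μ ≠ 0) (by linarith : (1:ℝ) - ν ≠ 0)]
    unfold phiAux; ring

lemma hasDerivAt_phiAux {μ ν : ℝ} (hν : ν ∈ Set.Ioo (0:ℝ) 1) :
    HasDerivAt (phiAux μ)
      (Real.log μ - Real.log ν - Real.log (1 - μ) + Real.log (1 - ν)) ν := by
  have d1 : HasDerivAt (fun x : ℝ => x * Real.log μ) (Real.log μ) ν := by
    simpa using (hasDerivAt_id ν).mul_const (Real.log μ)
  have d2 : HasDerivAt (fun x : ℝ => x * Real.log x) (Real.log ν + 1) ν :=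
    Real.hasDerivAt_mul_log hν.1.ne'
  have dsub : HasDerivAt (fun x : ℝ => 1 - x) (-1) ν := by
    exact (hasDerivAt_id' ν).const_sub (1:ℝ)
  have d3 : HasDerivAt (fun x : ℝ => (1 - x) * Real.log (1 - μ)) (-Real.log (1 - μ)) ν := by
    simpa using dsub.mul_const (Real.log (1 - μ))
  have d4 : HasDerivAt (fun x : ℝ => (1 - x) * Real.log (1 - x))
      ((Real.log (1 - ν) + 1) * (-1)) ν := by
    exact (Real.hasDerivAt_mul_log (by linarith [hν.2] : (1:ℝ) - ν ≠ 0)).comp ν dsub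
  have := ((d1.sub d2).add d3).sub d4
  exact this.congr_deriv (by ring)

theorem root_nu_star_exists_unique
    (μ ρ : ℝ) (hμ : μ ∈ Set.Ioo (0:ℝ) 1) (hρ : 0 < ρ)
    (h : 1 + ρ * Real.log (1 - μ) < 0) :
    (∃! ν : ℝ, ν ∈ Set.Ioo 0 μ ∧ 1 + ρ * Real.log (Gfun ν μ) = 0) ∧
    ((∃ ν ∈ Set.Ioc μ 1, 1 + ρ * Real.log (Gfun ν μ) = 0) ↔ 1 + ρ * Real.log μ ≤ 0) := by
  obtain ⟨hμ0, hμ1⟩ := hμ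
  set f : ℝ → ℝ := fun ν => 1 + ρ * phiAux μ ν with hf
  have hfc : Continuous f := by
    exact continuous_const.add (continuous_const.mul (phiAux_continuous μ))
  have hlog : ∀ ν : ℝ, 0 < ν → ν ≤ 1 → 1 + ρ * Real.log (Gfun ν μ) = f ν := by
    intro ν h0 h1
    rw [log_Gfun_eq ⟨hμ0, hμ1⟩ h0 h1]
  have hderiv : ∀ x ∈ Set.Ioo (0:ℝ) 1,
      deriv f x = ρ * (Real.log μ - Real.log x - Real.log (1 - μ) + Real.log (1 - x)) := by
    intro x hx
    have : HasDerivAt f (ρ * (Real.log μ - Real.log x - Real.log (1 - μ) + Real.log (1 - x))) x := by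
      exact ((hasDerivAt_phiAux (μ := μ) hx).const_mul ρ).const_add 1
    exact this.deriv
  have hf0 : f 0 = 1 + ρ * Real.log (1 - μ) := by
    simp [hf, phiAux, Real.log_one]
  have hfμ : f μ = 1 := by
    simp [hf, phiAux]
  have hf1 : f 1 = 1 + ρ * Real.log μ := by
    simp [hf, phiAux, Real.log_one]
  -- strict monotonicity on [0, μ]
  have hmono : StrictMonoOn f (Set.Icc 0 μ) := by
    apply strictMonoOn_of_deriv_pos (convex_Icc 0 μ) hfc.continuousOn
    intro x hx
    rw [interior_Icc] at hx
    have hx01 : x ∈ Set.Ioo (0:ℝ) 1 := ⟨hx.1, hx.2.trans hμ1⟩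
    rw [hderiv x hx01]
    have l1 := Real.log_lt_log hx.1 hx.2
    have l2 := Real.log_lt_log (by linarith : (0:ℝ) < 1 - μ) (by linarith [hx.2] : 1 - μ < 1 - x)
    nlinarith
  have hanti : StrictAntiOn f (Set.Icc μ 1) := by
    apply strictAntiOn_of_deriv_neg (convex_Icc μ 1) hfc.continuousOn
    intro x hx
    rw [interior_Icc] at hx
    have hx01 : x ∈ Set.Ioo (0:ℝ) 1 := ⟨hμ0.trans hx.1, hx.2⟩
    rw [hderiv x hx01]
    have l1 := Real.log_lt_log hμ0 hx.1
    have l2 := Real.log_lt_log (by linarith [hx.2] : (0:ℝ) < 1 - x) (by linarith [hx.1] : 1 - x < 1 - μ)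
    nlinarith
  constructor
  · -- existence and uniqueness in (0, μ)
    have h0lt : f 0 < 0 := by rw [hf0]; exact h
    have hmem : (0:ℝ) ∈ Set.Ioo (f 0) (f μ) := ⟨h0lt, by rw [hfμ]; norm_num⟩
    obtain ⟨ν, hν, hνeq⟩ := intermediate_value_Ioo hμ0.le hfc.continuousOn hmem
    refine ⟨ν, ⟨hν, ?_⟩, ?_⟩
    · rw [hlog ν hν.1 (hν.2.trans hμ1).le, hνeq]
    · rintro ν' ⟨hν', hν'eq⟩
      rw [hlog ν' hν'.1 (hν'.2.trans hμ1).le] at hν'eq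
      have hmemν : ν ∈ Set.Icc (0:ℝ) μ := ⟨hν.1.le, hν.2.le⟩
      have hmemν' : ν' ∈ Set.Icc (0:ℝ) μ := ⟨hν'.1.le, hν'.2.le⟩
      exact hmono.injOn hmemν' hmemν (by rw [hν'eq, hνeq])
  · constructor
    · rintro ⟨ν, hν, hνeq⟩
      rw [hlog ν (hμ0.trans hν.1) hν.2] at hνeq
      rw [← hf1]
      rcases eq_or_lt_of_le hν.2 with rfl | hlt
      · exact hνeq.le
      · have := hanti ⟨hν.1.le, hν.2⟩ (Set.right_mem_Icc.mpr hμ1.le) hlt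
        linarith [hνeq ▸ this]
    · intro h1
      have hmem : (0:ℝ) ∈ Set.Icc (f 1) (f μ) := ⟨by rw [hf1]; exact h1, by rw [hfμ]; norm_num⟩
      obtain ⟨ν, hν, hνeq⟩ := intermediate_value_Icc' hμ1.le hfc.continuousOn hmem
      have hνμ : μ < ν := by
        rcases eq_or_lt_of_le hν.1 with rfl | hlt
        · rw [hfμ] at hνeq; norm_num at hνeq
        · exact hlt
      exact ⟨ν, ⟨hνμ, hν.2⟩, by rw [hlog ν (hμ0.trans hνμ) hν.2, hνeq]⟩
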